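/- For every integer k ≥ 3, the number of isomorphism classes of paramedial quasigroups admitting an affine form over the cyclic group ℤ/2^k is 2^{k+1}. -/

import Mathlib

/-- `op` is a quasigroup operation: all left and right translations are bijective. -/
def IsQuasigroupOp {Q : Type*} (op : Q → Q → Q) : Prop :=
  (∀ a : Q, Function.Bijective fun x => op a x) ∧
  (∀ a : Q, Function.Bijective fun x => op x a)

/-- Isomorphism of binary structures: a bijection commuting with the operations. -/
def OpIso {A B : Type*} (op₁ : A → A → A) (op₂ : B → B → B) : Prop :=
  ∃ f : A ≃ B, ∀ x y, f (op₁ x y) = op₂ (f x) (f y)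

/-- The affine operation `x * y = φ(x) + ψ(y) + c` over an abelian group. -/
def affOp {G : Type*} [AddCommGroup G] (φ ψ : G ≃+ G) (c : G) : G → G → G :=
  fun x y => φ x + ψ y + c

/-- `op` is an affine form of a paramedial quasigroup over `G`:
`op = affOp φ ψ c` for automorphisms with `φ² = ψ²` (Němec–Kepka). -/
def IsAffineParamedialOp {G : Type*} [AddCommGroup G] (op : G → G → G) : Prop :=
  ∃ (φ ψ : G ≃+ G) (c : G), (∀ x, φ (φ x) = ψ (ψ x)) ∧ op = affOp φ ψ c

/-- `pqG G` is the number of isomorphism classes of paramedial quasigroups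
admitting an affine form over `G`. -/
noncomputable def pqG (G : Type*) [AddCommGroup G] : ℕ :=
  Nat.card (Quot fun o₁ o₂ : {op : G → G → G // IsAffineParamedialOp op} =>
    OpIso o₁.1 o₂.1)

namespace PQAux

section General

variable {n : ℕ} [NeZero n]

lemma addhom_mul (F : ZMod n → ZMod n) (h : ∀ a b, F (a + b) = F a + F b) (x : ZMod n) :
    F x = x * F 1 := by
  have key := map_nsmul (AddMonoidHom.mk' F h) x.val (1 : ZMod n)
  simp only [AddMonoidHom.mk'_apply, nsmul_eq_mul, mul_one] at key
  rwa [ZMod.natCast_val, ZMod.cast_id] at key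

lemma rigid (u w c u' w' c' : ZMod n) (hu : IsUnit u) (hw : IsUnit w)
    (f : ZMod n ≃ ZMod n)
    (hf : ∀ x y, f (u * x + w * y + c) = u' * f x + w' * f y + c') :
    u = u' ∧ w = w' := by
  obtain ⟨U, rfl⟩ := hu
  obtain ⟨W, rfl⟩ := hw
  set D : ZMod n := u' * f 0 + w' * f 0 + c' with hD
  have step1 : ∀ x y : ZMod n, f (x + y - c) = f x + f y - D := by
    intro x y
    have h1 := hf (↑U⁻¹ * (x - c)) (↑W⁻¹ * (y - c))
    have h2 := hf (↑U⁻¹ * (x - c)) 0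
    have h3 := hf 0 (↑W⁻¹ * (y - c))
    rw [show (↑U : ZMod n) * (↑U⁻¹ * (x - c)) + ↑W * (↑W⁻¹ * (y - c)) + c = x + y - c by
      rw [Units.mul_inv_cancel_left, Units.mul_inv_cancel_left]; ring] at h1
    rw [show (↑U : ZMod n) * (↑U⁻¹ * (x - c)) + ↑W * 0 + c = x by
      rw [Units.mul_inv_cancel_left]; ring] at h2
    rw [show (↑U : ZMod n) * 0 + ↑W * (↑W⁻¹ * (y - c)) + c = y by
      rw [Units.mul_inv_cancel_left]; ring] at h3
    rw [hD]
    linear_combination h1 - h2 - h3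
  set b : ZMod n := f (1 + c) - D with hb
  have hB : ∀ x : ZMod n, f (x + c) - D = x * b := by
    intro x
    have := addhom_mul (fun z => f (z + c) - D) (by
      intro a a'
      have hs := step1 (a + c) (a' + c)
      rw [show a + c + (a' + c) - c = a + a' + c by ring] at hs
      linear_combination hs) x
    simpa using this
  have hfz : ∀ z : ZMod n, f z = (z - c) * b + D := by
    intro z
    have := hB (z - c)
    rw [show z - c + c = z by ring] at this
    linear_combination this
  have hbU : IsUnit b := by
    have h5 : f (f.symm (1 + D)) = 1 + D := f.apply_symm_apply _
    rw [hfz] at h5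
    exact IsUnit.of_mul_eq_one (a := b) (f.symm (1 + D) - c) (by linear_combination h5)
  obtain ⟨Bu, hBu⟩ := hbU
  have cancel : ∀ p q : ZMod n, p * b = q * b → p = q := by
    intro p q hpq
    rw [← hBu] at hpq
    have := congrArg (· * (↑Bu⁻¹ : ZMod n)) hpq
    simpa [mul_assoc] using this
  have h10 := hf 1 0
  have h00 := hf 0 0
  have h01 := hf 0 1
  simp only [hfz] at h10 h00 h01
  constructor
  · exact cancel _ _ (by linear_combination h10 - h00)
  · exact cancel _ _ (by linear_combination h01 - h00)

lemma op_form (op : ZMod n → ZMod n → ZMod n) (h : IsAffineParamedialOp op) :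
    ∃ u w c : ZMod n, IsUnit u ∧ IsUnit w ∧ u ^ 2 = w ^ 2 ∧
      op = fun x y => u * x + w * y + c := by
  obtain ⟨φ, ψ, c, hpm, rfl⟩ := h
  have hφ : ∀ x, φ x = x * φ 1 := addhom_mul φ (map_add φ)
  have hψ : ∀ x, ψ x = x * ψ 1 := addhom_mul ψ (map_add ψ)
  refine ⟨φ 1, ψ 1, c, ?_, ?_, ?_, ?_⟩
  · obtain ⟨y, hy⟩ := φ.surjective 1
    exact IsUnit.of_mul_eq_one y (by rw [mul_comm, ← hφ y, hy])
  · obtain ⟨y, hy⟩ := ψ.surjective 1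
    exact IsUnit.of_mul_eq_one y (by rw [mul_comm, ← hψ y, hy])
  · have h1 := hpm 1
    rw [hφ (φ 1), hψ (ψ 1)] at h1
    rw [pow_two, pow_two]; exact h1
  · funext x y
    simp only [affOp]
    rw [hφ x, hψ y]; ring

def mulAddAut (u : (ZMod n)ˣ) : ZMod n ≃+ ZMod n where
  toFun x := ↑u * x
  invFun x := ↑u⁻¹ * x
  left_inv x := by simp
  right_inv x := by simp
  map_add' x y := mul_add _ _ _

omit [NeZero n] in
lemma mul_form_is (u w c : ZMod n) (hu : IsUnit u) (hw : IsUnit w) (hsq : u ^ 2 = w ^ 2) :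
    IsAffineParamedialOp (fun x y => u * x + w * y + c : ZMod n → ZMod n → ZMod n) := by
  obtain ⟨U, rfl⟩ := hu; obtain ⟨W, rfl⟩ := hw
  refine ⟨mulAddAut U, mulAddAut W, c, ?_, ?_⟩
  · intro x
    show (↑U : ZMod n) * (↑U * x) = ↑W * (↑W * x)
    linear_combination x * hsq
  · rfl

omit [NeZero n] in
lemma iso_of_same (u w c c' : ZMod n) (hs : IsUnit (u + w - 1)) :
    OpIso (fun x y => u * x + w * y + c : ZMod n → ZMod n → ZMod n)
          (fun x y => u * x + w * y + c') := by
  obtain ⟨S, hS⟩ := hs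
  refine ⟨Equiv.addRight (↑S⁻¹ * (c - c')), fun x y => ?_⟩
  simp only [Equiv.coe_addRight]
  have key : (u + w - 1) * (↑S⁻¹ * (c - c')) = c - c' := by
    rw [← hS]; exact Units.mul_inv_cancel_left S (c - c')
  linear_combination -key

lemma key_vals (o : {op : ZMod n → ZMod n → ZMod n // IsAffineParamedialOp op}) :
    IsUnit (o.1 1 0 - o.1 0 0) ∧ IsUnit (o.1 0 1 - o.1 0 0) ∧
      (o.1 1 0 - o.1 0 0) ^ 2 = (o.1 0 1 - o.1 0 0) ^ 2 := by
  obtain ⟨u, w, c, hu, hw, hsq, hop⟩ := op_form o.1 o.2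
  have e1 : o.1 1 0 - o.1 0 0 = u := by simp only [hop]; ring
  have e2 : o.1 0 1 - o.1 0 0 = w := by simp only [hop]; ring
  rw [e1, e2]; exact ⟨hu, hw, hsq⟩

noncomputable def toT (o : {op : ZMod n → ZMod n → ZMod n // IsAffineParamedialOp op}) :
    (ZMod n)ˣ × {e : ZMod n // e ^ 2 = 1} :=
  ⟨(key_vals o).1.unit,
   ⟨(o.1 0 1 - o.1 0 0) * ↑((key_vals o).1.unit)⁻¹, by
      have hv : ((key_vals o).1.unit : ZMod n) = o.1 1 0 - o.1 0 0 := (key_vals o).1.unit_spec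
      have hs := (key_vals o).2.2
      have hinv : ((key_vals o).1.unit : ZMod n) * ↑((key_vals o).1.unit)⁻¹ = 1 :=
        (key_vals o).1.unit.mul_inv
      set a : ZMod n := ((key_vals o).1.unit : ZMod n) with ha
      set v : ZMod n := (↑((key_vals o).1.unit)⁻¹ : ZMod n) with hvv
      linear_combination (-(v ^ 2)) * hs + (-(v ^ 2) * (a + (o.1 1 0 - o.1 0 0))) * hv +
        (a * v + 1) * hinv⟩⟩

lemma unit_cancel (U : (ZMod n)ˣ) (a b : ZMod n) (h : a * ↑U = b * ↑U) : a = b := by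
  have := congrArg (· * (↑U⁻¹ : ZMod n)) h
  simpa [mul_assoc] using this

lemma toT_val (o : {op : ZMod n → ZMod n → ZMod n // IsAffineParamedialOp op}) :
    (((toT o).1 : (ZMod n)ˣ) : ZMod n) = o.1 1 0 - o.1 0 0 ∧
      (((toT o).2 : {e : ZMod n // e ^ 2 = 1}) : ZMod n) * (((toT o).1 : (ZMod n)ˣ) : ZMod n)
        = o.1 0 1 - o.1 0 0 := by
  constructor
  · exact (key_vals o).1.unit_spec
  · show (o.1 0 1 - o.1 0 0) * ↑((key_vals o).1.unit)⁻¹ * ↑((key_vals o).1.unit)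
      = o.1 0 1 - o.1 0 0
    exact Units.inv_mul_cancel_right _ _

lemma toT_sound (o₁ o₂ : {op : ZMod n → ZMod n → ZMod n // IsAffineParamedialOp op})
    (hiso : OpIso o₁.1 o₂.1) : toT o₁ = toT o₂ := by
  obtain ⟨u₁, w₁, c₁, hu₁, hw₁, hsq₁, hop₁⟩ := op_form o₁.1 o₁.2
  obtain ⟨u₂, w₂, c₂, hu₂, hw₂, hsq₂, hop₂⟩ := op_form o₂.1 o₂.2
  obtain ⟨f, hf⟩ := hiso
  have hf' : ∀ x y, f (u₁ * x + w₁ * y + c₁) = u₂ * f x + w₂ * f y + c₂ := by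
    intro x y
    have := hf x y
    simp only [hop₁, hop₂] at this
    exact this
  obtain ⟨he1, he2⟩ := rigid u₁ w₁ c₁ u₂ w₂ c₂ hu₁ hw₁ f hf'
  have d1 : o₁.1 1 0 - o₁.1 0 0 = u₁ := by simp only [hop₁]; ring
  have d2 : o₂.1 1 0 - o₂.1 0 0 = u₂ := by simp only [hop₂]; ring
  have w1 : o₁.1 0 1 - o₁.1 0 0 = w₁ := by simp only [hop₁]; ring
  have w2 : o₂.1 0 1 - o₂.1 0 0 = w₂ := by simp only [hop₂]; ring
  have hU : (toT o₁).1 = (toT o₂).1 := by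
    apply Units.ext
    rw [(toT_val o₁).1, (toT_val o₂).1, d1, d2, he1]
  apply Prod.ext
  · exact hU
  · apply Subtype.ext
    apply unit_cancel (toT o₂).1
    have k1 := (toT_val o₁).2
    have k2 := (toT_val o₂).2
    rw [hU] at k1
    rw [k1, k2, w1, w2, he2]

lemma toT_inj (hsum : ∀ u w : ZMod n, IsUnit u → IsUnit w → IsUnit (u + w - 1))
    (o₁ o₂ : {op : ZMod n → ZMod n → ZMod n // IsAffineParamedialOp op})
    (h : toT o₁ = toT o₂) : OpIso o₁.1 o₂.1 := by
  obtain ⟨u₁, w₁, c₁, hu₁, hw₁, hsq₁, hop₁⟩ := op_form o₁.1 o₁.2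
  obtain ⟨u₂, w₂, c₂, hu₂, hw₂, hsq₂, hop₂⟩ := op_form o₂.1 o₂.2
  have d1 : o₁.1 1 0 - o₁.1 0 0 = u₁ := by simp only [hop₁]; ring
  have d2 : o₂.1 1 0 - o₂.1 0 0 = u₂ := by simp only [hop₂]; ring
  have w1 : o₁.1 0 1 - o₁.1 0 0 = w₁ := by simp only [hop₁]; ring
  have w2 : o₂.1 0 1 - o₂.1 0 0 = w₂ := by simp only [hop₂]; ring
  have hU : (toT o₁).1 = (toT o₂).1 := congrArg Prod.fst h
  have hu : u₁ = u₂ := by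
    rw [← d1, ← d2, ← (toT_val o₁).1, ← (toT_val o₂).1, hU]
  have hv : (((toT o₁).2 : {e : ZMod n // e ^ 2 = 1}) : ZMod n)
      = (((toT o₂).2 : {e : ZMod n // e ^ 2 = 1}) : ZMod n) := by rw [h]
  have hw : w₁ = w₂ := by
    have k1 := (toT_val o₁).2
    have k2 := (toT_val o₂).2
    rw [hU] at k1
    rw [hv] at k1
    rw [w1] at k1
    rw [w2] at k2
    rw [← k1, ← k2]
  rw [hop₁, hop₂, hu, hw]
  exact iso_of_same u₂ w₂ c₁ c₂ (hsum u₂ w₂ (hu ▸ hu₁) (hw ▸ hw₁))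

lemma toT_surj (t : (ZMod n)ˣ × {e : ZMod n // e ^ 2 = 1}) :
    ∃ o : {op : ZMod n → ZMod n → ZMod n // IsAffineParamedialOp op}, toT o = t := by
  obtain ⟨U, e, he⟩ := t
  have heU : IsUnit (e * ↑U) := by
    refine IsUnit.mul ?_ U.isUnit
    exact IsUnit.of_mul_eq_one (a := e) e (by rw [← pow_two]; exact he)
  have hsq : ((U : ZMod n)) ^ 2 = (e * ↑U) ^ 2 := by rw [mul_pow, he, one_mul]
  refine ⟨⟨fun x y => ↑U * x + (e * ↑U) * y + 0, mul_form_is _ _ _ U.isUnit heU hsq⟩, ?_⟩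
  have d1 : ((fun x y => (↑U : ZMod n) * x + (e * ↑U) * y + 0) : ZMod n → ZMod n → ZMod n) 1 0
      - (fun x y => (↑U : ZMod n) * x + (e * ↑U) * y + 0) 0 0 = ↑U := by simp
  have w1 : ((fun x y => (↑U : ZMod n) * x + (e * ↑U) * y + 0) : ZMod n → ZMod n → ZMod n) 0 1
      - (fun x y => (↑U : ZMod n) * x + (e * ↑U) * y + 0) 0 0 = e * ↑U := by simp
  set o : {op : ZMod n → ZMod n → ZMod n // IsAffineParamedialOp op} :=
    ⟨fun x y => ↑U * x + (e * ↑U) * y + 0, mul_form_is _ _ _ U.isUnit heU hsq⟩ with ho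
  have hUeq : (toT o).1 = U := by
    apply Units.ext
    rw [(toT_val o).1]
    exact d1
  apply Prod.ext
  · exact hUeq
  · apply Subtype.ext
    apply unit_cancel U
    have k1 := (toT_val o).2
    rw [hUeq] at k1
    rw [k1]
    exact w1

end General

lemma unit_parity (k : ℕ) (hk : k ≠ 0) (x : ZMod (2 ^ k)) :
    IsUnit x ↔ (ZMod.castHom (dvd_pow_self 2 hk) (ZMod 2)) x = 1 := by
  haveI : NeZero (2 ^ k) := ⟨pow_ne_zero _ two_ne_zero⟩
  have hx : ((x.val : ℕ) : ZMod (2 ^ k)) = x := by rw [ZMod.natCast_val, ZMod.cast_id]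
  constructor
  · intro h
    have h2 : IsUnit ((ZMod.castHom (dvd_pow_self 2 hk) (ZMod 2)) x) := h.map _
    revert h2
    generalize (ZMod.castHom (dvd_pow_self 2 hk) (ZMod 2)) x = y
    revert y; decide
  · intro h
    rw [← hx] at h ⊢
    rw [map_natCast] at h
    have hnd : ¬ (2 ∣ x.val) := by
      intro hd
      rw [(ZMod.natCast_eq_zero_iff x.val 2).mpr hd] at h
      exact absurd h (by decide)
    have hcop : Nat.Coprime x.val (2 ^ k) :=
      Nat.Coprime.pow_right _ ((Nat.coprime_comm).mp ((Nat.prime_two.coprime_iff_not_dvd).mpr hnd))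
    exact (ZMod.isUnit_iff_coprime _ _).mpr hcop

lemma sq_classify (m : ℕ) (x : ZMod (2 ^ (m + 3))) :
    x ^ 2 = 1 ↔ x = 1 ∨ x = -1 ∨ x = 1 + 2 ^ (m + 2) ∨ x = -1 + 2 ^ (m + 2) := by
  haveI : NeZero (2 ^ (m + 3)) := ⟨pow_ne_zero _ two_ne_zero⟩
  have h2n : ((2 : ZMod (2 ^ (m + 3)))) ^ (m + 3) = 0 := by
    have := ZMod.natCast_self (2 ^ (m + 3))
    push_cast at this
    exact this
  constructor
  · intro hx
    obtain ⟨M, hMx⟩ : ∃ M : ℤ, ((M : ℤ) : ZMod (2 ^ (m + 3))) = x :=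
      ⟨(x.val : ℤ), by push_cast; rw [ZMod.natCast_val, ZMod.cast_id]⟩
    have hdvd : ((2 : ℤ)) ^ (m + 3) ∣ M ^ 2 - 1 := by
      have : (((M ^ 2 - 1 : ℤ)) : ZMod (2 ^ (m + 3))) = 0 := by
        push_cast
        rw [hMx, hx]
        ring
      have := (ZMod.intCast_zmod_eq_zero_iff_dvd _ _).mp this
      push_cast at this
      exact this
    have hodd : Odd M := by
      rcases Int.even_or_odd M with he | ho
      · exfalso
        obtain ⟨t, rfl⟩ := he
        have h2 : (2 : ℤ) ∣ (t + t) ^ 2 - 1 :=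
          dvd_trans (by exact ⟨2 ^ (m + 2), by ring⟩) hdvd
        obtain ⟨s, hs⟩ := h2
        have h' : 4 * (t * t) - 1 = 2 * s := by linear_combination hs
        omega
      · exact ho
    obtain ⟨j, hj⟩ := hodd
    have hdvd2 : ((2 : ℤ)) ^ (m + 1) ∣ j * (j + 1) := by
      obtain ⟨q, hq⟩ := hdvd
      refine ⟨q, ?_⟩
      have h4 : (4 : ℤ) * (j * (j + 1)) = 4 * (2 ^ (m + 1) * q) := by
        rw [hj] at hq; linear_combination hq
      exact mul_left_cancel₀ (by norm_num) h4
    have hval : ∀ q : ℤ, ((2 : ZMod (2 ^ (m + 3)))) ^ (m + 2) * (q : ZMod (2 ^ (m + 3))) = 0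
        ∨ ((2 : ZMod (2 ^ (m + 3)))) ^ (m + 2) * (q : ZMod (2 ^ (m + 3))) = 2 ^ (m + 2) := by
      intro q
      rcases Int.even_or_odd q with ⟨r, rfl⟩ | ⟨r, rfl⟩
      · left
        push_cast
        rw [show ((2 : ZMod (2 ^ (m + 3)))) ^ (m + 2) * ((r : ZMod (2 ^ (m + 3))) + r)
            = (2 : ZMod (2 ^ (m + 3))) ^ (m + 3) * r by ring, h2n, zero_mul]
      · right
        push_cast
        rw [show ((2 : ZMod (2 ^ (m + 3)))) ^ (m + 2) * (2 * (r : ZMod (2 ^ (m + 3))) + 1)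
            = (2 : ZMod (2 ^ (m + 3))) ^ (m + 3) * r + 2 ^ (m + 2) by ring, h2n, zero_mul, zero_add]
    rcases Int.even_or_odd j with ⟨t, htj⟩ | ⟨t, htj⟩
    · have hcop : IsCoprime ((2 : ℤ) ^ (m + 1)) (j + 1) := by
        apply IsCoprime.pow_left
        exact ⟨-t, 1, by rw [htj]; ring⟩
      obtain ⟨q, hqq⟩ := hcop.dvd_of_dvd_mul_right hdvd2
      have hMq : M = 2 ^ (m + 2) * q + 1 := by rw [hj, hqq]; ring
      have hxq : x = ((2 : ZMod (2 ^ (m + 3)))) ^ (m + 2) * (q : ZMod (2 ^ (m + 3))) + 1 := by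
        rw [← hMx, hMq]; push_cast; ring
      rcases hval q with h0 | h0 <;> rw [hxq, h0]
      · left; ring
      · right; right; left; ring
    · have hcop : IsCoprime ((2 : ℤ) ^ (m + 1)) j := by
        apply IsCoprime.pow_left
        exact ⟨-t, 1, by rw [htj]; ring⟩
      obtain ⟨q, hqq⟩ := hcop.dvd_of_dvd_mul_left (by rwa [mul_comm] at hdvd2)
      have hMq : M = 2 ^ (m + 2) * q - 1 := by
        have : j = 2 ^ (m + 1) * q - 1 := by omega
        rw [hj, this]; ring
      have hxq : x = ((2 : ZMod (2 ^ (m + 3)))) ^ (m + 2) * (q : ZMod (2 ^ (m + 3))) - 1 := by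
        rw [← hMx, hMq]; push_cast; ring
      rcases hval q with h0 | h0 <;> rw [hxq, h0]
      · right; left; ring
      · right; right; right; ring
  · rintro (rfl | rfl | rfl | rfl)
    · rw [one_pow]
    · rw [neg_one_sq]
    · linear_combination (1 + (2 : ZMod (2 ^ (m + 3))) ^ (m + 1)) * h2n
    · linear_combination ((2 : ZMod (2 ^ (m + 3))) ^ (m + 1) - 1) * h2n

lemma card_sq (m : ℕ) [NeZero (2 ^ (m + 3))] :
    Nat.card {e : ZMod (2 ^ (m + 3)) // e ^ 2 = 1} = 4 := by
  classical
  rw [Nat.card_eq_fintype_card, Fintype.card_subtype]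
  have hfil : (Finset.filter (fun x : ZMod (2 ^ (m + 3)) => x ^ 2 = 1) Finset.univ)
      = {1, -1, 1 + 2 ^ (m + 2), -1 + 2 ^ (m + 2)} := by
    ext x
    simp only [Finset.mem_filter, Finset.mem_univ, true_and, Finset.mem_insert,
      Finset.mem_singleton]
    exact sq_classify m x
  rw [hfil]
  have r1 : (1 : ZMod (2 ^ (m + 3))) = ((1 : ℕ) : ZMod (2 ^ (m + 3))) := by norm_num
  have hNpos : 1 ≤ 2 ^ (m + 3) := Nat.one_le_two_pow
  have r2 : (-1 : ZMod (2 ^ (m + 3))) = ((2 ^ (m + 3) - 1 : ℕ) : ZMod (2 ^ (m + 3))) := by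
    rw [Nat.cast_sub hNpos, ZMod.natCast_self]
    push_cast
    ring
  have r3 : (1 + 2 ^ (m + 2) : ZMod (2 ^ (m + 3)))
      = ((2 ^ (m + 2) + 1 : ℕ) : ZMod (2 ^ (m + 3))) := by push_cast; ring
  have r4 : (-1 + 2 ^ (m + 2) : ZMod (2 ^ (m + 3)))
      = ((2 ^ (m + 2) - 1 : ℕ) : ZMod (2 ^ (m + 3))) := by
    rw [Nat.cast_sub Nat.one_le_two_pow]
    push_cast
    ring
  have inj : ∀ a b : ℕ, a < 2 ^ (m + 3) → b < 2 ^ (m + 3) →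
      ((a : ZMod (2 ^ (m + 3))) = (b : ZMod (2 ^ (m + 3)))) → a = b := by
    intro a b ha hb hab
    have := congrArg ZMod.val hab
    rwa [ZMod.val_cast_of_lt ha, ZMod.val_cast_of_lt hb] at this
  have hK4 : 4 ≤ 2 ^ (m + 2) := by
    calc (4 : ℕ) = 2 ^ 2 := by norm_num
    _ ≤ 2 ^ (m + 2) := Nat.pow_le_pow_right (by norm_num) (by omega)
  have hNK : 2 ^ (m + 3) = 2 * 2 ^ (m + 2) := by ring
  have nab : (1 : ZMod (2 ^ (m + 3))) ≠ -1 := by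
    intro h; rw [r2] at h; rw [r1] at h
    have := inj _ _ (by omega) (by omega) h; omega
  have nac : (1 : ZMod (2 ^ (m + 3))) ≠ 1 + 2 ^ (m + 2) := by
    intro h; rw [r3] at h; rw [r1] at h
    have := inj _ _ (by omega) (by omega) h; omega
  have nad : (1 : ZMod (2 ^ (m + 3))) ≠ -1 + 2 ^ (m + 2) := by
    intro h; rw [r4] at h; rw [r1] at h
    have := inj _ _ (by omega) (by omega) h; omega
  have nbc : (-1 : ZMod (2 ^ (m + 3))) ≠ 1 + 2 ^ (m + 2) := by
    intro h; rw [r3] at h; rw [r2] at h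
    have := inj _ _ (by omega) (by omega) h; omega
  have nbd : (-1 : ZMod (2 ^ (m + 3))) ≠ -1 + 2 ^ (m + 2) := by
    intro h; rw [r4] at h; rw [r2] at h
    have := inj _ _ (by omega) (by omega) h; omega
  have ncd : (1 + 2 ^ (m + 2) : ZMod (2 ^ (m + 3))) ≠ -1 + 2 ^ (m + 2) := by
    intro h; rw [r3, r4] at h
    have := inj _ _ (by omega) (by omega) h; omega
  rw [Finset.card_insert_of_notMem (by
      simp only [Finset.mem_insert, Finset.mem_singleton]
      push_neg
      exact ⟨nab, nac, nad⟩),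
    Finset.card_insert_of_notMem (by
      simp only [Finset.mem_insert, Finset.mem_singleton]
      push_neg
      exact ⟨nbc, nbd⟩),
    Finset.card_insert_of_notMem (by simp only [Finset.mem_singleton]; exact ncd),
    Finset.card_singleton]

end PQAux

theorem pq_cyclic_two_power (k : ℕ) (hk : 3 ≤ k) :
    pqG (ZMod (2 ^ k)) = 2 ^ (k + 1) := by
  obtain ⟨m, rfl⟩ : ∃ m, k = m + 3 := ⟨k - 3, by omega⟩
  haveI : NeZero (2 ^ (m + 3)) := ⟨pow_ne_zero _ two_ne_zero⟩
  have hk0 : (m + 3) ≠ 0 := by omega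
  have hsum : ∀ u w : ZMod (2 ^ (m + 3)), IsUnit u → IsUnit w → IsUnit (u + w - 1) := by
    intro u w hu hw
    rw [PQAux.unit_parity (m + 3) hk0] at hu hw ⊢
    rw [map_sub, map_add, map_one, hu, hw]
    decide
  have hbij : Function.Bijective
      (Quot.lift PQAux.toT PQAux.toT_sound :
        (Quot fun o₁ o₂ : {op : ZMod (2 ^ (m + 3)) → ZMod (2 ^ (m + 3)) → ZMod (2 ^ (m + 3)) //
          IsAffineParamedialOp op} => OpIso o₁.1 o₂.1) →
        (ZMod (2 ^ (m + 3)))ˣ × {e : ZMod (2 ^ (m + 3)) // e ^ 2 = 1}) := by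
    constructor
    · intro q₁ q₂
      induction q₁ using Quot.ind with | _ o₁ =>
      induction q₂ using Quot.ind with | _ o₂ =>
      intro h
      exact Quot.sound (PQAux.toT_inj hsum o₁ o₂ h)
    · intro t
      obtain ⟨o, ho⟩ := PQAux.toT_surj t
      exact ⟨Quot.mk _ o, ho⟩
  have hcard := Nat.card_eq_of_bijective _ hbij
  unfold pqG
  rw [hcard, Nat.card_prod]
  have hu : Nat.card (ZMod (2 ^ (m + 3)))ˣ = 2 ^ (m + 2) := by
    rw [Nat.card_eq_fintype_card, ZMod.card_units_eq_totient,
      Nat.totient_prime_pow Nat.prime_two (by omega : 0 < m + 3)]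
    norm_num
  rw [hu, PQAux.card_sq m]
  ring
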